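/- Suppose f : ℕ → ℕ satisfies f(m) = ∑_{w : w^m = 1} g(w) for a function g : S^1 → ℕ that is Riemann-integrable and bounded. Then lim_{m→∞} f(m)/m = (1/2π) ∫_0^{2π} g(e^{iθ}) dθ. -/

import Mathlib

open MeasureTheory

/-- Integral of a function constant on the pieces of a uniform partition of `[0, m*a)`. -/
lemma aux_sum_Ico (F : ℝ → ℝ) (hF : Measurable F) (C : ℝ) (hFb : ∀ x, ‖F x‖ ≤ C)
    (a : ℝ) (ha : 0 < a)
    (hconst : ∀ k : ℕ, ∀ θ ∈ Set.Ico ((k : ℝ) * a) (((k : ℝ) + 1) * a), F θ = F (k * a)) :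
    ∀ m : ℕ, ∫ θ in Set.Ico (0 : ℝ) (m * a), F θ = ∑ k ∈ Finset.range m, F (k * a) * a := by
  have hint : ∀ u v : ℝ, IntegrableOn F (Set.Ico u v) := by
    intro u v
    refine Integrable.mono' (integrableOn_const (C := C) measure_Ico_lt_top.ne)
      hF.aestronglyMeasurable.restrict (Filter.Eventually.of_forall hFb)
  intro m
  induction m with
  | zero => simp
  | succ n ih =>
    have h1 : (0 : ℝ) ≤ (n : ℝ) * a := by positivity
    have h2 : (n : ℝ) * a ≤ ((n : ℕ) + 1 : ℕ) * a := by
      push_cast; nlinarith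
    have hsplit : Set.Ico (0 : ℝ) (((n : ℕ) + 1 : ℕ) * a)
        = Set.Ico 0 ((n : ℝ) * a) ∪ Set.Ico ((n : ℝ) * a) (((n : ℕ) + 1 : ℕ) * a) :=
      (Set.Ico_union_Ico_eq_Ico h1 h2).symm
    rw [hsplit, setIntegral_union (Set.disjoint_left.2 fun x hx1 hx2 => absurd hx1.2 (not_lt.2 hx2.1))
      measurableSet_Ico (hint _ _) (hint _ _), ih, Finset.sum_range_succ]
    congr 1
    have hcc : ∀ θ ∈ Set.Ico ((n : ℝ) * a) (((n : ℕ) + 1 : ℕ) * a), F θ = F (n * a) := by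
      intro θ hθ
      refine hconst n θ ?_
      push_cast at hθ ⊢
      exact hθ
    rw [setIntegral_congr_fun measurableSet_Ico hcc, setIntegral_const, measureReal_def, Real.volume_Ico,
      smul_eq_mul]
    rw [ENNReal.toReal_ofReal (by push_cast; nlinarith)]
    push_cast
    ring

/-- Existence of the mean index: if `f(m) = ∑_{w^m = 1} g(w)` for a bounded,
Riemann-integrable (i.e. bounded and almost everywhere continuous) function `g` on the
circle, then `f(m)/m → (1/2π) ∫₀^{2π} g(e^{iθ}) dθ`. -/
theorem stmt_18 (f : ℕ → ℕ) (g : ℂ → ℕ)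
    (hsum : ∀ m : ℕ, 1 ≤ m →
      (f m : ℝ) = ∑ w ∈ Polynomial.nthRootsFinset m (1 : ℂ), (g w : ℝ))
    (hbdd : ∃ C : ℕ, ∀ w : ℂ, ‖w‖ = 1 → g w ≤ C)
    (hcont : ∀ᵐ θ : ℝ ∂volume,
      ContinuousAt (fun t : ℝ => (g (Complex.exp (t * Complex.I)) : ℝ)) θ) :
    Filter.Tendsto (fun m : ℕ => (f m : ℝ) / m) Filter.atTop
      (nhds ((1 / (2 * Real.pi)) *
        ∫ θ in (0 : ℝ)..(2 * Real.pi), (g (Complex.exp (θ * Complex.I)) : ℝ))) := by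
  obtain ⟨C, hC⟩ := hbdd
  set c : ℝ := 2 * Real.pi with hc
  have hcpos : 0 < c := by positivity
  set h : ℝ → ℝ := fun t : ℝ => (g (Complex.exp (t * Complex.I)) : ℝ) with hh
  have hhb : ∀ t : ℝ, ‖h t‖ ≤ (C : ℝ) := by
    intro t
    have h1 : ‖Complex.exp ((t : ℂ) * Complex.I)‖ = 1 := Complex.norm_exp_ofReal_mul_I t
    have h2 := hC _ h1
    simp only [hh, Real.norm_eq_abs, Nat.abs_cast]
    exact_mod_cast h2
  -- the step functions
  set ψ : ℕ → ℝ → ℝ := fun m θ => h ((c / m) * ⌊θ / (c / m)⌋) with hψ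
  have hψmeas : ∀ m : ℕ, Measurable (ψ m) := by
    intro m
    have : Measurable fun θ : ℝ => (⌊θ / (c / m)⌋ : ℤ) :=
      Int.measurable_floor.comp (measurable_id.div_const _)
    exact (measurable_from_top (f := fun z : ℤ => h ((c / m) * z))).comp this
  have hψb : ∀ m : ℕ, ∀ θ : ℝ, ‖ψ m θ‖ ≤ (C : ℝ) := fun m θ => hhb _
  -- dominated convergence
  have key : Filter.Tendsto (fun m : ℕ => ∫ θ in Set.Ico (0 : ℝ) c, ψ m θ) Filter.atTop
      (nhds (∫ θ in Set.Ico (0 : ℝ) c, h θ)) := by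
    refine tendsto_integral_of_dominated_convergence (fun _ => (C : ℝ))
      (fun m => (hψmeas m).aestronglyMeasurable.restrict)
      (integrableOn_const (C := (C : ℝ)) measure_Ico_lt_top.ne)
      (fun m => Filter.Eventually.of_forall fun θ => hψb m θ) ?_
    refine ae_restrict_of_ae ?_
    filter_upwards [hcont] with θ hθ
    have hpt : Filter.Tendsto (fun m : ℕ => (c / m) * ⌊θ / (c / m)⌋) Filter.atTop (nhds θ) := by
      refine tendsto_of_tendsto_of_tendsto_of_le_of_le'
        (g := fun m : ℕ => θ - c / m) (h := fun _ : ℕ => θ) ?_ tendsto_const_nhds ?_ ?_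
      · simpa using (tendsto_const_nhds (x := θ)).sub
          (tendsto_const_div_atTop_nhds_zero_nat c)
      · filter_upwards [Filter.eventually_ge_atTop 1] with m hm
        have hmp : (0 : ℝ) < m := by exact_mod_cast hm
        have ha : (0 : ℝ) < c / m := div_pos hcpos hmp
        have hf1 : θ / (c / m) - 1 < (⌊θ / (c / m)⌋ : ℝ) := Int.sub_one_lt_floor _
        have hid : (c / m) * (θ / (c / m)) = θ := by field_simp
        nlinarith
      · filter_upwards [Filter.eventually_ge_atTop 1] with m hm
        have hmp : (0 : ℝ) < m := by exact_mod_cast hm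
        have ha : (0 : ℝ) < c / m := div_pos hcpos hmp
        have hf2 : (⌊θ / (c / m)⌋ : ℝ) ≤ θ / (c / m) := Int.floor_le _
        have hid : (c / m) * (θ / (c / m)) = θ := by field_simp
        nlinarith
    exact hθ.tendsto.comp hpt
  -- identification of the integral of ψ m with the Riemann sum
  have hident : ∀ m : ℕ, 1 ≤ m →
      ∫ θ in Set.Ico (0 : ℝ) c, ψ m θ
        = ∑ k ∈ Finset.range m, h ((k : ℝ) * (c / m)) * (c / m) := by
    intro m hm
    have hmp : (0 : ℝ) < m := by exact_mod_cast hm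
    have ha : (0 : ℝ) < c / m := div_pos hcpos hmp
    have hfloor : ∀ k : ℕ, ∀ θ ∈ Set.Ico ((k : ℝ) * (c / m)) (((k : ℝ) + 1) * (c / m)),
        ⌊θ / (c / m)⌋ = (k : ℤ) := by
      intro k θ hθ
      rw [Int.floor_eq_iff]
      constructor
      · push_cast
        rw [le_div_iff₀ ha]
        exact hθ.1
      · push_cast
        rw [div_lt_iff₀ ha]
        exact hθ.2
    have hconst : ∀ k : ℕ, ∀ θ ∈ Set.Ico ((k : ℝ) * (c / m)) (((k : ℝ) + 1) * (c / m)),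
        ψ m θ = ψ m (k * (c / m)) := by
      intro k θ hθ
      have h1 : ⌊θ / (c / m)⌋ = (k : ℤ) := hfloor k θ hθ
      have h2 : ⌊((k : ℝ) * (c / m)) / (c / m)⌋ = (k : ℤ) := by
        refine hfloor k _ ⟨le_refl _, ?_⟩
        nlinarith
      simp only [hψ, h1, h2]
    have hmc : (m : ℝ) * (c / m) = c := by field_simp
    have := aux_sum_Ico (ψ m) (hψmeas m) (C : ℝ) (hψb m) (c / m) ha hconst m
    rw [hmc] at this
    rw [this]
    refine Finset.sum_congr rfl fun k hk => ?_
    have h2 : ⌊((k : ℝ) * (c / m)) / (c / m)⌋ = (k : ℤ) := by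
      refine hfloor k _ ⟨le_refl _, ?_⟩
      nlinarith
    simp only [hψ, h2]
    rw [mul_comm (c / (m : ℝ)) (((k : ℤ) : ℝ))]
    norm_num
  -- convert the target integral
  have hIco : ∫ θ in Set.Ico (0 : ℝ) c, h θ = ∫ θ in (0 : ℝ)..c, h θ := by
    rw [intervalIntegral.integral_of_le hcpos.le]
    exact setIntegral_congr_set Ico_ae_eq_Ioc
  -- f m / m equals (1/c) times the integral of ψ m, eventually
  have heq : ∀ᶠ m : ℕ in Filter.atTop,
      (1 / c) * ∫ θ in Set.Ico (0 : ℝ) c, ψ m θ = (f m : ℝ) / m := by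
    filter_upwards [Filter.eventually_ge_atTop 1] with m hm
    have hmp : (0 : ℝ) < m := by exact_mod_cast hm
    have hm0 : m ≠ 0 := by omega
    -- roots of unity enumeration
    set ζ : ℂ := Complex.exp (2 * Real.pi * Complex.I / m) with hζdef
    have hζ : IsPrimitiveRoot ζ m := Complex.isPrimitiveRoot_exp m hm0
    have himg : Polynomial.nthRootsFinset m (1 : ℂ) = (Finset.range m).image (fun k => ζ ^ k) := by
      refine (Finset.eq_of_subset_of_card_le ?_ ?_).symm
      · intro x hx
        simp only [Finset.mem_image, Finset.mem_range] at hx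
        obtain ⟨k, _, rfl⟩ := hx
        refine (Polynomial.mem_nthRootsFinset (by omega) (1 : ℂ)).2 ?_
        rw [← pow_mul, mul_comm k m, pow_mul, hζ.pow_eq_one, one_pow]
      · rw [hζ.card_nthRootsFinset, Finset.card_image_of_injOn hζ.injOn_pow]
        simp
    have hterm : ∀ k : ℕ, ((g (ζ ^ k) : ℝ)) = h ((k : ℝ) * (c / m)) := by
      intro k
      have : ζ ^ k = Complex.exp ((((k : ℝ) * (c / m) : ℝ) : ℂ) * Complex.I) := by
        rw [hζdef, ← Complex.exp_nat_mul]
        congr 1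
        push_cast [hc]
        field_simp
      rw [hh]
      simp only [this]
    rw [hident m hm, hsum m hm, himg, Finset.sum_image (fun x hx y hy hxy =>
      hζ.injOn_pow (by simpa using hx) (by simpa using hy) hxy)]
    have hsum2 : ∑ k ∈ Finset.range m, ((g (ζ ^ k) : ℝ))
        = ∑ k ∈ Finset.range m, h ((k : ℝ) * (c / m)) := by
      exact Finset.sum_congr rfl fun k _ => hterm k
    rw [hsum2, ← Finset.sum_mul]
    field_simp
  -- conclude
  have final := key.const_mul (1 / c)
  rw [hIco] at final
  exact Filter.Tendsto.congr' heq final
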